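/- No-dimension Tverberg theorem: Let P be a finite set of n points in EuclideanSpace ℝ (Fin d) and let k be an integer with 1 ≤ k ≤ n. Then there exist a point q and a partition of P into k pairwise disjoint nonempty subsets P₁, …, P_k whose union is P, such that for every i: infDist q (convexHull ℝ (P i)) ≤ (2 + sqrt 2) * sqrt(k / n) * diam P. -/

import Mathlib

open Finset

theorem ndt_exists_inner_ge {α F : Type*} [NormedAddCommGroup F] [InnerProductSpace ℝ F]
    (s : Finset α) (hs : s.Nonempty) (z : α → F) (u : F) :
    ∃ a ∈ s, (inner ℝ u ((s.card : ℝ)⁻¹ • ∑ x ∈ s, z x) : ℝ) ≤ inner ℝ u (z a) := by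
  have hc : ((s.card : ℝ)) ≠ 0 := by
    have : 0 < s.card := Finset.card_pos.mpr hs
    positivity
  apply Finset.exists_le_of_sum_le hs
  have h1 : ∑ x ∈ s, (inner ℝ u (z x) : ℝ) = inner ℝ u (∑ x ∈ s, z x) := (inner_sum s z u).symm
  rw [h1, Finset.sum_const, nsmul_eq_mul, inner_smul_right]
  field_simp
  exact le_rfl

theorem ndt_balanced (n k : ℕ) (hk : 0 < k) (i : ℕ) (hi : i < k) :
    n / k ≤ ((Finset.range n).filter (fun j => j % k = i)).card ∧
    ((Finset.range n).filter (fun j => j % k = i)).card ≤ n / k + 1 := by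
  constructor
  · have := Finset.card_le_card_of_injOn (fun t => t * k + i)
      (s := Finset.range (n / k)) (t := (Finset.range n).filter (fun j => j % k = i))
      ?_ ?_
    · simpa using this
    · intro t ht
      rw [Finset.mem_coe, Finset.mem_range] at ht
      rw [Finset.mem_coe, Finset.mem_filter, Finset.mem_range]
      constructor
      · have h1 : (t + 1) * k ≤ (n / k) * k := Nat.mul_le_mul_right k ht
        have h2 : (n / k) * k ≤ n := Nat.div_mul_le_self n k
        calc t * k + i < t * k + k := by omega
          _ = (t + 1) * k := by ring
          _ ≤ n := le_trans h1 h2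
      · show (t * k + i) % k = i
        rw [Nat.add_comm, Nat.add_mul_mod_self_right]
        exact Nat.mod_eq_of_lt hi
    · intro x _ y _ h
      simp only at h
      have : x * k = y * k := by omega
      exact Nat.eq_of_mul_eq_mul_right hk this
  · have := Finset.card_le_card_of_injOn (fun j => j / k)
      (s := (Finset.range n).filter (fun j => j % k = i)) (t := Finset.range (n / k + 1))
      ?_ ?_
    · simpa using this
    · intro j hj
      rw [Finset.mem_coe, Finset.mem_filter, Finset.mem_range] at hj
      rw [Finset.mem_coe, Finset.mem_range]
      have h2 : j / k ≤ n / k := Nat.div_le_div_right (le_of_lt hj.1)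
      show j / k < n / k + 1
      omega
  -- injectivity
    · intro x hx y hy h
      rw [Finset.mem_coe, Finset.mem_filter] at hx hy
      have hx2 := hx.2; have hy2 := hy.2
      have e1 := Nat.div_add_mod x k
      have e2 := Nat.div_add_mod y k
      simp only at h
      rw [← e1, ← e2, h, hx2, hy2]

theorem ndt_card_filter_equiv {α β : Type*} [Fintype α] [Fintype β] [DecidableEq α] [DecidableEq β]
    (e : α ≃ β) (p : β → Prop) [DecidablePred p] :
    (Finset.univ.filter (fun x => p (e x))).card = (Finset.univ.filter p).card := by
  apply Finset.card_bij (fun x _ => e x)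
  · intro a ha
    rw [Finset.mem_filter] at ha ⊢
    exact ⟨Finset.mem_univ _, ha.2⟩
  · intro a _ b _ h
    exact e.injective h
  · intro b hb
    rw [Finset.mem_filter] at hb
    exact ⟨e.symm b, by rw [Finset.mem_filter]; simpa using hb.2, by simp⟩
theorem ndt_arith (mR ri rj V D : ℝ) (hm : 1 ≤ mR) (hri0 : 0 < ri) (hrj0 : 0 < rj)
    (hri_ge : (mR + 1)⁻¹ ≤ ri) (hri_le : ri ≤ mR⁻¹) (hrj_le : rj ≤ mR⁻¹)
    (hV0 : 0 ≤ V) (hD0 : 0 ≤ D)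
    (hstep : 2 * ri * V ≤ (ri ^ 2 + rj ^ 2) * D ^ 2) : V * mR ≤ 2 * D ^ 2 := by
  have hm0 : (0:ℝ) < mR := by linarith
  have hm10 : (0:ℝ) < mR + 1 := by linarith
  have e2 : 2 * (mR + 1)⁻¹ * V ≤ 2 * ri * V := by nlinarith
  have hri2 : ri ^ 2 ≤ (mR⁻¹) ^ 2 := pow_le_pow_left₀ hri0.le hri_le 2
  have hrj2 : rj ^ 2 ≤ (mR⁻¹) ^ 2 := pow_le_pow_left₀ hrj0.le hrj_le 2
  have e3 : (ri ^ 2 + rj ^ 2) * D ^ 2 ≤ 2 * (mR⁻¹) ^ 2 * D ^ 2 := by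
    nlinarith [sq_nonneg D]
  have h2Vm1 : 2 * (mR + 1)⁻¹ * V ≤ 2 * (mR⁻¹) ^ 2 * D ^ 2 := le_trans e2 (le_trans hstep e3)
  have hinv : mR * mR⁻¹ = 1 := mul_inv_cancel₀ (ne_of_gt hm0)
  have hinv1 : (mR + 1) * (mR + 1)⁻¹ = 1 := mul_inv_cancel₀ (ne_of_gt hm10)
  have hinvrel : (mR + 1) ≤ 2 * mR := by linarith
  -- multiply h2Vm1 by (mR+1) * mR^2 / 2
  have h4 : V ≤ (mR + 1) * (mR⁻¹) ^ 2 * D ^ 2 := by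
    have hp : (0:ℝ) < (mR + 1)⁻¹ := by positivity
    nlinarith [mul_le_mul_of_nonneg_left h2Vm1 (le_of_lt hm10)]
  have h5 : (mR + 1) * (mR⁻¹) ^ 2 ≤ 2 / mR := by
    rw [div_eq_mul_inv]
    have hminv0 : (0:ℝ) < mR⁻¹ := by positivity
    have h7 : mR⁻¹ ≤ 1 := by
      rw [inv_le_one_iff₀]; right; exact hm
    nlinarith
  have h8 : V ≤ 2 / mR * D ^ 2 := by nlinarith [sq_nonneg D]
  have := mul_le_mul_of_nonneg_right h8 (le_of_lt hm0)
  calc V * mR ≤ 2 / mR * D ^ 2 * mR := this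
    _ = 2 * D ^ 2 := by field_simp
set_option maxHeartbeats 1000000 in
theorem ndt_key {α F : Type*} [Fintype α] [DecidableEq α]
    [NormedAddCommGroup F] [InnerProductSpace ℝ F]
    (z : α → F) (k m : ℕ) (hk0 : 0 < k) (hm1 : 1 ≤ m) (D : ℝ)
    (hdist : ∀ x y : α, ‖z x - z y‖ ≤ D)
    (c : F)
    (hc : (Fintype.card α : ℝ) • c = ∑ x, z x)
    (g₀ : α → Fin k)
    (hg₀ : ∀ i, m ≤ ((Finset.univ.filter (fun x => g₀ x = i)).card) ∧
      ((Finset.univ.filter (fun x => g₀ x = i)).card) ≤ m + 1) :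
    ∃ g : α → Fin k,
      (∀ i, (Finset.univ.filter (fun x => g x = i)).card
          = (Finset.univ.filter (fun x => g₀ x = i)).card) ∧
      ∀ i, ‖(((Finset.univ.filter (fun x => g x = i)).card : ℝ))⁻¹ •
              (∑ x ∈ Finset.univ.filter (fun x => g x = i), z x) - c‖ ^ 2 * (m : ℝ)
            ≤ 2 * D ^ 2 := by
  classical
  set Q : (α → Fin k) → Fin k → Finset α := fun g i => Finset.univ.filter (fun x => g x = i)
    with hQdef
  set ctr : Finset α → F := fun s => (s.card : ℝ)⁻¹ • ∑ x ∈ s, z x with hctrdef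
  set Φ : (α → Fin k) → ℝ := fun g => ∑ i, ‖ctr (Q g i) - c‖ ^ 2 with hΦdef
  set Adm : (α → Fin k) → Prop := fun g => ∀ i, (Q g i).card = (Q g₀ i).card with hAdmdef
  obtain ⟨g, hgmem, hgmin'⟩ := Finset.exists_min_image (Finset.univ.filter Adm) Φ
    ⟨g₀, Finset.mem_filter.mpr ⟨Finset.mem_univ _, fun i => rfl⟩⟩
  have hgA : Adm g := (Finset.mem_filter.mp hgmem).2
  have hgmin : ∀ g', Adm g' → Φ g ≤ Φ g' :=
    fun g' h => hgmin' g' (Finset.mem_filter.mpr ⟨Finset.mem_univ _, h⟩)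
  have hQcard : ∀ i, m ≤ (Q g i).card ∧ (Q g i).card ≤ m + 1 := fun i => (hgA i) ▸ hg₀ i
  have hQne : ∀ i, (Q g i).Nonempty := fun i =>
    Finset.card_pos.mp (lt_of_lt_of_le hm1 (hQcard i).1)
  have hQcardpos : ∀ i, 0 < (Q g i).card := fun i => lt_of_lt_of_le hm1 (hQcard i).1
  have hQcardposR : ∀ i, (0:ℝ) < ((Q g i).card : ℝ) := fun i => by exact_mod_cast hQcardpos i
  have hQcard0 : ∀ i, ((Q g i).card : ℝ) ≠ 0 := fun i => ne_of_gt (hQcardposR i)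
  have hD0 : 0 ≤ D := by
    obtain ⟨x0, _⟩ := hQne ⟨0, hk0⟩
    have := hdist x0 x0
    simpa using this
  have hm0R : (0:ℝ) < (m : ℝ) := by exact_mod_cast hm1
  have hctr_smul : ∀ s : Finset α, (s.card : ℝ) ≠ 0 →
      (s.card : ℝ) • ctr s = ∑ x ∈ s, z x := by
    intro s hs
    rw [hctrdef]
    simp only
    rw [smul_smul, mul_inv_cancel₀ hs, one_smul]
  have hfib : ∀ g' : α → Fin k, ∑ i, ∑ x ∈ Q g' i, z x = ∑ x, z x := fun g' =>
    Finset.sum_fiberwise Finset.univ g' z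
  have hcards : ∑ i, (Q g i).card = Fintype.card α := by
    rw [hQdef]
    simp only
    rw [← Finset.card_eq_sum_card_fiberwise (fun x _ => Finset.mem_univ (g x))]
    rfl
  set v : Fin k → F := fun l => ctr (Q g l) - c with hvdef
  have hv0 : ∑ l, ((Q g l).card : ℝ) • v l = 0 := by
    rw [hvdef]
    simp only [smul_sub]
    rw [Finset.sum_sub_distrib]
    have h1 : ∑ l, ((Q g l).card : ℝ) • ctr (Q g l) = ∑ x, z x := by
      rw [Finset.sum_congr rfl (fun l _ => hctr_smul _ (hQcard0 l))]
      exact hfib g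
    have h2 : ∑ l, ((Q g l).card : ℝ) • c = (Fintype.card α : ℝ) • c := by
      rw [← Finset.sum_smul]
      congr 1
      exact_mod_cast congrArg Nat.cast hcards
    rw [h1, h2, hc, sub_self]
  refine ⟨g, hgA, ?_⟩
  intro i
  show ‖v i‖ ^ 2 * (m : ℝ) ≤ 2 * D ^ 2
  by_contra hbad
  push_neg at hbad
  have hvi_pos : 0 < ‖v i‖ ^ 2 := by nlinarith [sq_nonneg D]
  have hsum0 : ∑ l, ((Q g l).card : ℝ) * (inner ℝ (v i) (v l) : ℝ) = 0 := by
    have h : (inner ℝ (v i) (∑ l, ((Q g l).card : ℝ) • v l) : ℝ) = 0 := by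
      rw [hv0, inner_zero_right]
    rw [inner_sum] at h
    simpa only [real_inner_smul_right] using h
  obtain ⟨j, hij⟩ : ∃ j, (inner ℝ (v i) (v j) : ℝ) < 0 := by
    by_contra hno
    push_neg at hno
    have hterm : 0 < ((Q g i).card : ℝ) * (inner ℝ (v i) (v i) : ℝ) := by
      rw [real_inner_self_eq_norm_sq]
      exact mul_pos (hQcardposR i) hvi_pos
    have hle : ((Q g i).card : ℝ) * (inner ℝ (v i) (v i) : ℝ)
        ≤ ∑ l, ((Q g l).card : ℝ) * (inner ℝ (v i) (v l) : ℝ) :=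
      Finset.single_le_sum (f := fun l => ((Q g l).card : ℝ) * (inner ℝ (v i) (v l) : ℝ))
        (fun l _ => mul_nonneg (le_of_lt (hQcardposR l)) (hno l)) (Finset.mem_univ i)
    rw [hsum0] at hle
    linarith
  have hji : j ≠ i := by
    rintro rfl
    rw [real_inner_self_eq_norm_sq] at hij
    nlinarith
  set Mi : ℕ := (Q g i).card with hMi
  set Mj : ℕ := (Q g j).card with hMj
  set ri : ℝ := (Mi : ℝ)⁻¹ with hri
  set rj : ℝ := (Mj : ℝ)⁻¹ with hrj
  have hMi0 : (0:ℝ) < Mi := hQcardposR i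
  have hMj0 : (0:ℝ) < Mj := hQcardposR j
  have hri0 : 0 < ri := by positivity
  have hrj0 : 0 < rj := by positivity
  set u : F := ri • v i - rj • v j with hudef
  obtain ⟨a, haQ, hainner⟩ := ndt_exists_inner_ge (Q g i) (hQne i) z u
  obtain ⟨b, hbQ, hbinner'⟩ := ndt_exists_inner_ge (Q g j) (hQne j) z (-u)
  have hbinner : (inner ℝ u (z b) : ℝ) ≤ inner ℝ u (ctr (Q g j)) := by
    have h1 : (inner ℝ (-u) (ctr (Q g j)) : ℝ) ≤ inner ℝ (-u) (z b) := hbinner'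
    simp only [inner_neg_left] at h1
    linarith
  have hainner2 : (inner ℝ u (ctr (Q g i)) : ℝ) ≤ inner ℝ u (z a) := hainner
  have hga : g a = i := (Finset.mem_filter.mp haQ).2
  have hgb : g b = j := (Finset.mem_filter.mp hbQ).2
  have hab : a ≠ b := by
    rintro rfl
    rw [hga] at hgb
    exact hji hgb.symm
  have hbnotin : b ∉ Q g i := by
    intro hmem
    have h := (Finset.mem_filter.mp hmem).2
    rw [hgb] at h
    exact hji h
  have hanotin : a ∉ Q g j := by
    intro hmem
    have h := (Finset.mem_filter.mp hmem).2
    rw [hga] at h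
    exact hji h.symm
  set g' : α → Fin k := g ∘ (Equiv.swap a b) with hg'def
  have hQ'i : Q g' i = insert b ((Q g i).erase a) := by
    ext x
    simp only [hQdef, hg'def, Finset.mem_filter, Finset.mem_univ, true_and,
      Finset.mem_insert, Finset.mem_erase, Function.comp_apply]
    rcases eq_or_ne x a with rfl | hxa
    · rw [Equiv.swap_apply_left]
      simp [hgb, hji, hab, Ne.symm hab]
    · rcases eq_or_ne x b with rfl | hxb
      · rw [Equiv.swap_apply_right]
        simp [hga]
      · rw [Equiv.swap_apply_of_ne_of_ne hxa hxb]
        simp [hxa, hxb]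
  have hQ'j : Q g' j = insert a ((Q g j).erase b) := by
    ext x
    simp only [hQdef, hg'def, Finset.mem_filter, Finset.mem_univ, true_and,
      Finset.mem_insert, Finset.mem_erase, Function.comp_apply]
    rcases eq_or_ne x a with rfl | hxa
    · rw [Equiv.swap_apply_left]
      simp [hgb]
    · rcases eq_or_ne x b with rfl | hxb
      · rw [Equiv.swap_apply_right]
        simp [hga, Ne.symm hji, hxa]
      · rw [Equiv.swap_apply_of_ne_of_ne hxa hxb]
        simp [hxa, hxb]
  have hQ'other : ∀ l, l ≠ i → l ≠ j → Q g' l = Q g l := by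
    intro l hli hlj
    ext x
    simp only [hQdef, hg'def, Finset.mem_filter, Finset.mem_univ, true_and,
      Function.comp_apply]
    rcases eq_or_ne x a with rfl | hxa
    · rw [Equiv.swap_apply_left, hgb, hga]
      exact ⟨fun h => absurd h.symm hlj, fun h => absurd h.symm hli⟩
    · rcases eq_or_ne x b with rfl | hxb
      · rw [Equiv.swap_apply_right, hga, hgb]
        exact ⟨fun h => absurd h.symm hli, fun h => absurd h.symm hlj⟩
      · rw [Equiv.swap_apply_of_ne_of_ne hxa hxb]
  have hbnotin' : b ∉ (Q g i).erase a := fun h => hbnotin (Finset.mem_of_mem_erase h)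
  have hanotin' : a ∉ (Q g j).erase b := fun h => hanotin (Finset.mem_of_mem_erase h)
  have hcard'i : (Q g' i).card = Mi := by
    rw [hQ'i, Finset.card_insert_of_notMem hbnotin', Finset.card_erase_of_mem haQ]
    have h : 1 ≤ Mi := Finset.card_pos.mpr (hQne i)
    omega
  have hcard'j : (Q g' j).card = Mj := by
    rw [hQ'j, Finset.card_insert_of_notMem hanotin', Finset.card_erase_of_mem hbQ]
    have h : 1 ≤ Mj := Finset.card_pos.mpr (hQne j)
    omega
  have hAdm' : Adm g' := by
    intro l
    rcases eq_or_ne l i with rfl | hli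
    · rw [hcard'i]; exact hgA l
    · rcases eq_or_ne l j with rfl | hlj
      · rw [hcard'j]; exact hgA l
      · rw [hQ'other l hli hlj]; exact hgA l
  have hΦle : Φ g ≤ Φ g' := hgmin g' hAdm'
  set w : F := z b - z a with hwdef
  have hsum'i : ∑ x ∈ Q g' i, z x = (∑ x ∈ Q g i, z x) + w := by
    rw [hQ'i, Finset.sum_insert hbnotin', Finset.sum_erase_eq_sub haQ, hwdef]
    abel
  have hsum'j : ∑ x ∈ Q g' j, z x = (∑ x ∈ Q g j, z x) - w := by
    rw [hQ'j, Finset.sum_insert hanotin', Finset.sum_erase_eq_sub hbQ, hwdef]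
    abel
  have hctr'i : ctr (Q g' i) - c = v i + ri • w := by
    rw [hvdef]
    simp only
    rw [hctrdef]
    simp only
    rw [hcard'i, hsum'i, smul_add]
    rw [hri]
    abel
  have hctr'j : ctr (Q g' j) - c = v j - rj • w := by
    rw [hvdef]
    simp only
    rw [hctrdef]
    simp only
    rw [hcard'j, hsum'j, smul_sub]
    rw [hrj]
    abel
  have hΦdiff : Φ g' - Φ g
      = (‖v i + ri • w‖ ^ 2 - ‖v i‖ ^ 2) + (‖v j - rj • w‖ ^ 2 - ‖v j‖ ^ 2) := by
    rw [hΦdef]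
    simp only
    rw [← Finset.sum_sub_distrib]
    rw [← Finset.sum_subset (Finset.subset_univ ({i, j} : Finset (Fin k)))
      (by
        intro l _ hl
        simp only [Finset.mem_insert, Finset.mem_singleton] at hl
        push_neg at hl
        rw [hQ'other l hl.1 hl.2]
        simp [hvdef])]
    rw [Finset.sum_pair (Ne.symm hji)]
    rw [hctr'i, hctr'j]
  have hexpand_i : ‖v i + ri • w‖ ^ 2 - ‖v i‖ ^ 2
      = 2 * ri * (inner ℝ (v i) w : ℝ) + ri ^ 2 * ‖w‖ ^ 2 := by
    rw [norm_add_sq_real, real_inner_smul_right, norm_smul]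
    rw [Real.norm_eq_abs, mul_pow, sq_abs]
    ring
  have hexpand_j : ‖v j - rj • w‖ ^ 2 - ‖v j‖ ^ 2
      = -(2 * rj * (inner ℝ (v j) w : ℝ)) + rj ^ 2 * ‖w‖ ^ 2 := by
    rw [norm_sub_sq_real, real_inner_smul_right, norm_smul]
    rw [Real.norm_eq_abs, mul_pow, sq_abs]
    ring
  have huw_eq : (inner ℝ u w : ℝ) = ri * (inner ℝ (v i) w : ℝ) - rj * (inner ℝ (v j) w : ℝ) := by
    rw [hudef, inner_sub_left, real_inner_smul_left, real_inner_smul_left]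
  have hΦdiff2 : Φ g' - Φ g = 2 * (inner ℝ u w : ℝ) + (ri ^ 2 + rj ^ 2) * ‖w‖ ^ 2 := by
    rw [hΦdiff, hexpand_i, hexpand_j, huw_eq]
    ring
  have hiw : (inner ℝ u w : ℝ) ≤ inner ℝ u (ctr (Q g j)) - inner ℝ u (ctr (Q g i)) := by
    rw [hwdef, inner_sub_right]
    linarith
  have hctrsub : ctr (Q g j) - ctr (Q g i) = v j - v i := by
    show ctr (Q g j) - ctr (Q g i) = (ctr (Q g j) - c) - (ctr (Q g i) - c)
    abel
  have huvv : (inner ℝ u (v i - v j) : ℝ) ≥ ri * ‖v i‖ ^ 2 := by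
    have ha1 : (inner ℝ u (v i - v j) : ℝ)
        = ri * inner ℝ (v i) (v i - v j) - rj * inner ℝ (v j) (v i - v j) := by
      rw [hudef, inner_sub_left, real_inner_smul_left, real_inner_smul_left]
    have ha2 : (inner ℝ (v i) (v i - v j) : ℝ) = ‖v i‖ ^ 2 - inner ℝ (v i) (v j) := by
      rw [inner_sub_right, real_inner_self_eq_norm_sq]
    have ha3 : (inner ℝ (v j) (v i - v j) : ℝ) = inner ℝ (v i) (v j) - ‖v j‖ ^ 2 := by
      rw [inner_sub_right, real_inner_self_eq_norm_sq, real_inner_comm]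
    rw [ha1, ha2, ha3]
    nlinarith [hij, hri0, hrj0, sq_nonneg ‖v j‖]
  have huw : (inner ℝ u w : ℝ) ≤ -(ri * ‖v i‖ ^ 2) := by
    have h1 : (inner ℝ u (ctr (Q g j)) : ℝ) - inner ℝ u (ctr (Q g i))
        = inner ℝ u (ctr (Q g j) - ctr (Q g i)) := (inner_sub_right _ _ _).symm
    have h2 : (inner ℝ u (ctr (Q g j) - ctr (Q g i)) : ℝ) = -(inner ℝ u (v i - v j) : ℝ) := by
      rw [hctrsub, ← inner_neg_right]
      congr 1
      abel
    linarith [hiw, huvv, le_of_eq h1, le_of_eq h1.symm]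
  have hwD : ‖w‖ ≤ D := hdist b a
  have hw2 : ‖w‖ ^ 2 ≤ D ^ 2 := by nlinarith [norm_nonneg w]
  have hfinal : 0 ≤ -(2 * ri * ‖v i‖ ^ 2) + (ri ^ 2 + rj ^ 2) * D ^ 2 := by
    have h0 : 0 ≤ Φ g' - Φ g := by linarith
    rw [hΦdiff2] at h0
    nlinarith [hri0, hrj0]
  have hMiub : (Mi : ℝ) ≤ (m : ℝ) + 1 := by exact_mod_cast (hQcard i).2
  have hMilb : (m : ℝ) ≤ (Mi : ℝ) := by exact_mod_cast (hQcard i).1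
  have hMjlb : (m : ℝ) ≤ (Mj : ℝ) := by exact_mod_cast (hQcard j).1
  have hri_le : ri ≤ (m : ℝ)⁻¹ := by
    rw [hri]
    exact inv_anti₀ hm0R hMilb
  have hrj_le : rj ≤ (m : ℝ)⁻¹ := by
    rw [hrj]
    exact inv_anti₀ hm0R hMjlb
  have hri_ge : ((m:ℝ) + 1)⁻¹ ≤ ri := by
    rw [hri]
    exact inv_anti₀ (by linarith) hMiub
  have hstep : 2 * ri * ‖v i‖ ^ 2 ≤ (ri ^ 2 + rj ^ 2) * D ^ 2 := by linarith
  have hfin := ndt_arith (m:ℝ) ri rj (‖v i‖ ^ 2) D (by exact_mod_cast hm1) hri0 hrj0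
    hri_ge hri_le hrj_le (sq_nonneg _) hD0 hstep
  linarith
set_option maxHeartbeats 1000000 in
theorem no_dimension_tverberg (d n k : ℕ) (hk1 : 1 ≤ k) (hkn : k ≤ n)
    (P : Finset (EuclideanSpace ℝ (Fin d))) (hP : P.card = n) :
    ∃ (q : EuclideanSpace ℝ (Fin d))
      (f : Fin k → Finset (EuclideanSpace ℝ (Fin d))),
      (∀ i, f i ⊆ P) ∧
      (∀ i, (f i).Nonempty) ∧
      (∀ i j, i ≠ j → Disjoint (f i) (f j)) ∧
      (⋃ i, (f i : Set (EuclideanSpace ℝ (Fin d)))) = (P : Set (EuclideanSpace ℝ (Fin d))) ∧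
      ∀ i, Metric.infDist q (convexHull ℝ ((f i : Set (EuclideanSpace ℝ (Fin d))))) ≤
        (2 + Real.sqrt 2) * Real.sqrt ((k : ℝ) / (n : ℝ)) *
          Metric.diam (P : Set (EuclideanSpace ℝ (Fin d))) := by
  classical
  have hk0 : 0 < k := hk1
  have hn0 : 0 < n := lt_of_lt_of_le hk0 hkn
  set m := n / k with hmdef
  have hm1 : 1 ≤ m := (Nat.one_le_div_iff hk0).mpr hkn
  have hn2km : n ≤ 2 * (k * m) := by
    have h1 : k * m + n % k = n := Nat.div_add_mod n k
    have h2 : n % k < k := Nat.mod_lt n hk0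
    have h3 : k ≤ k * m := Nat.le_mul_of_pos_right k hm1
    omega
  set D := Metric.diam (P : Set (EuclideanSpace ℝ (Fin d))) with hDdef
  have hD0 : 0 ≤ D := Metric.diam_nonneg
  have hPb : Bornology.IsBounded (P : Set (EuclideanSpace ℝ (Fin d))) := P.finite_toSet.isBounded
  set z : ↥P → EuclideanSpace ℝ (Fin d) := fun x => (x : EuclideanSpace ℝ (Fin d)) with hzdef
  have hdist : ∀ x y : ↥P, ‖z x - z y‖ ≤ D := by
    intro x y
    rw [← dist_eq_norm]
    exact Metric.dist_le_diam_of_mem hPb x.2 y.2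
  set c : EuclideanSpace ℝ (Fin d) := (n : ℝ)⁻¹ • ∑ p ∈ P, p with hcdef
  have hcardP : Fintype.card ↥P = n := by rw [Fintype.card_coe, hP]
  have hc : (Fintype.card ↥P : ℝ) • c = ∑ x, z x := by
    rw [hcardP, hcdef, smul_smul, mul_inv_cancel₀ (by positivity : (n:ℝ) ≠ 0), one_smul]
    exact (Finset.sum_coe_sort P id).symm
  -- initial balanced partition
  obtain ⟨g₀, hg₀⟩ : ∃ g : ↥P → Fin k,
      ∀ i, m ≤ ((Finset.univ.filter (fun x => g x = i)).card) ∧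
        ((Finset.univ.filter (fun x => g x = i)).card) ≤ m + 1 := by
    have e : ↥P ≃ Fin n := P.equivFin.trans (finCongr hP)
    refine ⟨fun x => ⟨(e x : ℕ) % k, Nat.mod_lt _ hk0⟩, fun i => ?_⟩
    have hcf : ((Finset.univ.filter
          (fun x : ↥P => (⟨(e x : ℕ) % k, Nat.mod_lt _ hk0⟩ : Fin k) = i)).card)
        = ((Finset.range n).filter (fun j => j % k = (i : ℕ))).card := by
      rw [ndt_card_filter_equiv e (fun j : Fin n => (⟨(j : ℕ) % k, Nat.mod_lt _ hk0⟩ : Fin k) = i)]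
      apply Finset.card_bij (fun (x : Fin n) _ => (x : ℕ))
      · intro a ha
        rw [Finset.mem_filter] at ha
        rw [Finset.mem_filter, Finset.mem_range]
        refine ⟨a.isLt, ?_⟩
        have h := ha.2
        rw [Fin.ext_iff] at h
        simpa using h
      · intro a _ b _ h
        exact Fin.ext h
      · intro b hb
        rw [Finset.mem_filter, Finset.mem_range] at hb
        refine ⟨⟨b, hb.1⟩, ?_, rfl⟩
        rw [Finset.mem_filter]
        refine ⟨Finset.mem_univ _, ?_⟩
        rw [Fin.ext_iff]
        simpa using hb.2
    rw [hcf]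
    exact ndt_balanced n k hk0 i i.isLt
  obtain ⟨g, hgcards, hbound⟩ := ndt_key z k m hk0 hm1 D hdist c hc g₀ hg₀
  set Q : Fin k → Finset ↥P := fun i => Finset.univ.filter (fun x => g x = i) with hQdef
  have hQcard : ∀ i, m ≤ (Q i).card ∧ (Q i).card ≤ m + 1 := fun i => (hgcards i) ▸ hg₀ i
  have hQne : ∀ i, (Q i).Nonempty := fun i =>
    Finset.card_pos.mp (lt_of_lt_of_le hm1 (hQcard i).1)
  have hQcardposR : ∀ i, (0:ℝ) < ((Q i).card : ℝ) := fun i => by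
    have := lt_of_lt_of_le hm1 (hQcard i).1
    exact_mod_cast this
  set ctr : Fin k → EuclideanSpace ℝ (Fin d) :=
    fun i => ((Q i).card : ℝ)⁻¹ • ∑ x ∈ Q i, z x with hctrdef
  refine ⟨c, fun i => (Q i).map (Function.Embedding.subtype _), ?_, ?_, ?_, ?_, ?_⟩
  · intro i x hx
    rw [Finset.mem_map] at hx
    obtain ⟨y, _, rfl⟩ := hx
    exact y.2
  · intro i
    exact Finset.Nonempty.map (hQne i)
  · intro i j hij
    rw [Finset.disjoint_map]
    rw [Finset.disjoint_left]
    intro x hxi hxj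
    have h1 := (Finset.mem_filter.mp hxi).2
    have h2 := (Finset.mem_filter.mp hxj).2
    exact hij (h1 ▸ h2 ▸ rfl)
  · ext x
    simp only [Set.mem_iUnion, Finset.coe_map, Set.mem_image, Finset.mem_coe]
    constructor
    · rintro ⟨i, y, _, rfl⟩
      exact y.2
    · intro hx
      refine ⟨g ⟨x, hx⟩, ⟨x, hx⟩, ?_, rfl⟩
      rw [hQdef]
      rw [Finset.mem_filter]
      exact ⟨Finset.mem_univ _, rfl⟩
  · intro i
    have hmem : ctr i ∈ convexHull ℝ
        (((Q i).map (Function.Embedding.subtype _) : Finset (EuclideanSpace ℝ (Fin d))) :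
          Set (EuclideanSpace ℝ (Fin d))) := by
      have hcm := Finset.centerMass_mem_convexHull (R := ℝ)
        (s := (((Q i).map (Function.Embedding.subtype _) : Finset (EuclideanSpace ℝ (Fin d))) :
          Set (EuclideanSpace ℝ (Fin d))))
        (Q i) (w := fun _ => (1:ℝ))
        (fun _ _ => zero_le_one)
        (by
          rw [Finset.sum_const, nsmul_eq_mul, mul_one]
          exact hQcardposR i)
        (z := z)
        (fun x hx => Finset.mem_coe.mpr (Finset.mem_map.mpr ⟨x, hx, rfl⟩))
      have heq : (Q i).centerMass (fun _ => (1:ℝ)) z = ctr i := by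
        rw [Finset.centerMass]
        simp only [one_smul, Finset.sum_const, nsmul_eq_mul, mul_one]
        rfl
      rwa [heq] at hcm
    have h1 : Metric.infDist c (convexHull ℝ
        (((Q i).map (Function.Embedding.subtype _) : Finset (EuclideanSpace ℝ (Fin d))) :
          Set (EuclideanSpace ℝ (Fin d)))) ≤ dist c (ctr i) :=
      Metric.infDist_le_dist_of_mem hmem
    have h2 : dist c (ctr i) = ‖ctr i - c‖ := by
      rw [dist_eq_norm, norm_sub_rev]
    have hkey : ‖ctr i - c‖ ^ 2 * (m : ℝ) ≤ 2 * D ^ 2 := hbound i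
    have hm0R : (0:ℝ) < m := by exact_mod_cast hm1
    have hn0R : (0:ℝ) < n := by exact_mod_cast hn0
    have hk0R : (0:ℝ) < k := by exact_mod_cast hk0
    have hn2kmR : (n:ℝ) ≤ 2 * ((k:ℝ) * (m:ℝ)) := by exact_mod_cast hn2km
    have hv2 : ‖ctr i - c‖ ^ 2 ≤ 4 * ((k:ℝ) / (n:ℝ)) * D ^ 2 := by
      have h3 : ‖ctr i - c‖ ^ 2 ≤ 2 * D ^ 2 / (m:ℝ) := by
        rw [le_div_iff₀ hm0R]
        linarith
      have h4 : 2 * D ^ 2 / (m:ℝ) ≤ 4 * ((k:ℝ) / (n:ℝ)) * D ^ 2 := by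
        rw [div_le_iff₀ hm0R]
        have e : 4 * ((k:ℝ)/(n:ℝ)) * D ^ 2 * (m:ℝ) = 4 * (k:ℝ) * (m:ℝ) * D ^ 2 / (n:ℝ) := by
          field_simp
        rw [e, le_div_iff₀ hn0R]
        nlinarith [mul_nonneg (by linarith : (0:ℝ) ≤ 2 * ((k:ℝ) * (m:ℝ)) - (n:ℝ)) (sq_nonneg D)]
      linarith
    have hRHS0 : 0 ≤ (2 + Real.sqrt 2) * Real.sqrt ((k : ℝ) / (n : ℝ)) * D := by
      have hs1 := Real.sqrt_nonneg (2:ℝ)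
      have hs2 := Real.sqrt_nonneg ((k:ℝ)/(n:ℝ))
      positivity
    have hRHS2 : ((2 + Real.sqrt 2) * Real.sqrt ((k : ℝ) / (n : ℝ)) * D) ^ 2
        = (2 + Real.sqrt 2) ^ 2 * ((k:ℝ)/(n:ℝ)) * D ^ 2 := by
      rw [mul_pow, mul_pow, Real.sq_sqrt (by positivity : (0:ℝ) ≤ (k:ℝ)/(n:ℝ))]
    have hc4 : (4:ℝ) ≤ (2 + Real.sqrt 2) ^ 2 := by
      nlinarith [Real.sqrt_nonneg (2:ℝ)]
    have hfin2 : ‖ctr i - c‖ ^ 2 ≤ ((2 + Real.sqrt 2) * Real.sqrt ((k : ℝ) / (n : ℝ)) * D) ^ 2 := by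
      rw [hRHS2]
      have hkn0 : (0:ℝ) ≤ (k:ℝ)/(n:ℝ) := by positivity
      nlinarith [sq_nonneg D]
    have hfin : ‖ctr i - c‖ ≤ (2 + Real.sqrt 2) * Real.sqrt ((k : ℝ) / (n : ℝ)) * D := by
      have hs := Real.sqrt_le_sqrt hfin2
      rwa [Real.sqrt_sq (norm_nonneg _), Real.sqrt_sq hRHS0] at hs
    calc Metric.infDist c _ ≤ dist c (ctr i) := h1
      _ = ‖ctr i - c‖ := h2
      _ ≤ _ := hfin
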